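/- Let z be a T-periodic C² solution of z'' + c·z' + b·d·exp(2z) = a·c + b·f(t). Then for all t, (1/2)·log(a·c/(b·d)) − (√T/2)·(b/c)·‖f‖₂ ≤ z(t) ≤ (1/2)·log(a·c/(b·d)) + (√T/2)·(b/c)·‖f‖₂, where ‖f‖₂ = (∫₀ᵀ f²)^{1/2}. -/

import Mathlib

open MeasureTheory intervalIntegral Set

lemma cs_interval {u v : ℝ → ℝ} (hu : Continuous u) (hv : Continuous v) {A B : ℝ}
    (hAB : A ≤ B) :
    ∫ t in A..B, u t * v t
      ≤ Real.sqrt (∫ t in A..B, u t ^ 2) * Real.sqrt (∫ t in A..B, v t ^ 2) := by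
  have hconj : Real.HolderConjugate 2 2 := Real.holderConjugate_iff.mpr ⟨one_lt_two, by norm_num⟩
  have bound : ∀ w : ℝ → ℝ, Continuous w →
      MemLp w (ENNReal.ofReal 2) (volume.restrict (Set.Ioc A B)) := by
    intro w hw
    obtain ⟨C, hC⟩ := (isCompact_Icc (a := A) (b := B)).exists_bound_of_continuousOn
      hw.continuousOn
    refine MemLp.of_bound hw.aestronglyMeasurable C ?_
    filter_upwards [ae_restrict_mem measurableSet_Ioc] with x hx
    exact hC x (Set.Ioc_subset_Icc_self hx)
  have int1 : IntegrableOn (fun t => u t * v t) (Set.Ioc A B) volume :=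
    (hu.mul hv).integrableOn_Ioc
  have int2 : IntegrableOn (fun t => ‖u t‖ * ‖v t‖) (Set.Ioc A B) volume :=
    (hu.norm.mul hv.norm).integrableOn_Ioc
  rw [intervalIntegral.integral_of_le hAB, intervalIntegral.integral_of_le hAB,
    intervalIntegral.integral_of_le hAB]
  calc ∫ t in Set.Ioc A B, u t * v t
      ≤ ∫ t in Set.Ioc A B, ‖u t‖ * ‖v t‖ :=
        integral_mono int1 int2 (fun x => by
          simpa [abs_mul] using le_abs_self (u x * v x))
    _ ≤ (∫ t in Set.Ioc A B, ‖u t‖ ^ (2:ℝ)) ^ ((1:ℝ)/2) *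
        (∫ t in Set.Ioc A B, ‖v t‖ ^ (2:ℝ)) ^ ((1:ℝ)/2) :=
        integral_mul_norm_le_Lp_mul_Lq hconj (bound u hu) (bound v hv)
    _ = Real.sqrt (∫ t in Set.Ioc A B, u t ^ 2) * Real.sqrt (∫ t in Set.Ioc A B, v t ^ 2) := by
        have h1 : ∀ w : ℝ → ℝ, (∫ t in Set.Ioc A B, ‖w t‖ ^ (2:ℝ))
            = ∫ t in Set.Ioc A B, w t ^ 2 := by
          intro w
          refine integral_congr_ae (Filter.Eventually.of_forall fun x => ?_)
          simp only []
          rw [show ((2:ℝ)) = ((2:ℕ):ℝ) by norm_num, Real.rpow_natCast]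
          simp [sq_abs]
        rw [h1, h1, Real.sqrt_eq_rpow, Real.sqrt_eq_rpow]

theorem stmt5 (a b c d T : ℝ) (ha : 0 < a) (hb : 0 < b) (hc : 0 < c) (hd : 0 < d)
    (hT : 0 < T) (f : ℝ → ℝ) (hf : Continuous f) (hfper : Function.Periodic f T)
    (hfmean : ∫ t in (0 : ℝ)..T, f t = 0)
    (z z' z'' : ℝ → ℝ)
    (hz1 : ∀ t, HasDerivAt z (z' t) t)
    (hz2 : ∀ t, HasDerivAt z' (z'' t) t)
    (hz''cont : Continuous z'')
    (hzper : Function.Periodic z T)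
    (heq : ∀ t, z'' t + c * z' t + b * d * Real.exp (2 * z t) = a * c + b * f t) :
    ∀ t,
      (1 / 2) * Real.log (a * c / (b * d))
          - (Real.sqrt T / 2) * (b / c) * Real.sqrt (∫ s in (0 : ℝ)..T, (f s) ^ 2)
        ≤ z t ∧
      z t ≤ (1 / 2) * Real.log (a * c / (b * d))
          + (Real.sqrt T / 2) * (b / c) * Real.sqrt (∫ s in (0 : ℝ)..T, (f s) ^ 2) := by
  -- continuity
  have hzc : Continuous z := by
    rw [continuous_iff_continuousAt]; exact fun t => (hz1 t).continuousAt
  have hz'c : Continuous z' := by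
    rw [continuous_iff_continuousAt]; exact fun t => (hz2 t).continuousAt
  have hexpc : Continuous (fun t => Real.exp (2 * z t)) :=
    Real.continuous_exp.comp (continuous_const.mul hzc)
  -- z' is periodic
  have hz'per : Function.Periodic z' T := by
    intro t
    have h1 : HasDerivAt (fun s => z (s + T)) (z' (t + T) * 1) t :=
      (hz1 (t + T)).comp t ((hasDerivAt_id t).add_const T)
    have h2 : (fun s => z (s + T)) = z := funext fun s => hzper s
    rw [h2, mul_one] at h1
    exact h1.unique (hz1 t)
  have hzT : z T = z 0 := by simpa using hzper 0
  have hz'T : z' T = z' 0 := by simpa using hz'per 0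
  -- fundamental theorem of calculus pieces
  have ftcz : ∀ A B : ℝ, ∫ t in A..B, z' t = z B - z A := fun A B =>
    intervalIntegral.integral_eq_sub_of_hasDerivAt (fun x _ => hz1 x)
      (hz'c.intervalIntegrable A B)
  have ftcz'' : ∫ t in (0:ℝ)..T, z'' t = 0 := by
    rw [intervalIntegral.integral_eq_sub_of_hasDerivAt (fun x _ => hz2 x)
      (hz''cont.intervalIntegrable 0 T), hz'T]; ring
  have ftcexp : ∫ t in (0:ℝ)..T, Real.exp (2 * z t) * z' t = 0 := by
    have hderiv : ∀ x ∈ Set.uIcc (0:ℝ) T,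
        HasDerivAt (fun s => Real.exp (2 * z s) / 2) (Real.exp (2 * z x) * z' x) x := by
      intro x _
      have h1 : HasDerivAt (fun s => 2 * z s) (2 * z' x) x := (hz1 x).const_mul 2
      have h2 : HasDerivAt (fun s => Real.exp (2 * z s) / 2)
          (Real.exp (2 * z x) * (2 * z' x) / 2) x := h1.exp.div_const 2
      convert h2 using 1; ring
    rw [intervalIntegral.integral_eq_sub_of_hasDerivAt hderiv
      ((hexpc.mul hz'c).intervalIntegrable 0 T), hzT]; ring
  have ftczz : ∫ t in (0:ℝ)..T, z'' t * z' t = 0 := by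
    have hderiv : ∀ x ∈ Set.uIcc (0:ℝ) T,
        HasDerivAt (fun s => z' s ^ 2 / 2) (z'' x * z' x) x := by
      intro x _
      have h2 : HasDerivAt (fun s => z' s ^ 2 / 2)
          ((2:ℕ) * z' x ^ (2 - 1) * z'' x / 2) x := ((hz2 x).pow 2).div_const 2
      convert h2 using 1; ring
    rw [intervalIntegral.integral_eq_sub_of_hasDerivAt hderiv
      ((hz''cont.mul hz'c).intervalIntegrable 0 T), hz'T]; ring
  -- Step 1: mean value of exp(2z)
  have Iexp : ∫ t in (0:ℝ)..T, Real.exp (2 * z t) = a * c * T / (b * d) := by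
    have hR : ∫ t in (0:ℝ)..T, (a * c + b * f t) = a * c * T := by
      rw [intervalIntegral.integral_add (g := fun t => b * f t) intervalIntegrable_const
          ((continuous_const.mul hf).intervalIntegrable 0 T),
        show (∫ t in (0:ℝ)..T, b * f t) = b * ∫ t in (0:ℝ)..T, f t from
          intervalIntegral.integral_const_mul b f,
        hfmean, intervalIntegral.integral_const]
      simp [smul_eq_mul]; ring
    have hsum : ∫ t in (0:ℝ)..T, (z'' t + c * z' t + b * d * Real.exp (2 * z t))
        = ∫ t in (0:ℝ)..T, (a * c + b * f t) :=
      intervalIntegral.integral_congr (fun x _ => heq x)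
    rw [intervalIntegral.integral_add (f := fun t => z'' t + c * z' t)
        (g := fun t => b * d * Real.exp (2 * z t))
        ((hz''cont.intervalIntegrable 0 T).add
          ((continuous_const.mul hz'c).intervalIntegrable 0 T))
        ((continuous_const.mul hexpc).intervalIntegrable 0 T),
      intervalIntegral.integral_add (g := fun t => c * z' t) (hz''cont.intervalIntegrable 0 T)
        ((continuous_const.mul hz'c).intervalIntegrable 0 T),
      intervalIntegral.integral_const_mul, intervalIntegral.integral_const_mul,
      hR, ftcz'', ftcz, hzT] at hsum
    have hmain : b * d * ∫ t in (0:ℝ)..T, Real.exp (2 * z t) = a * c * T := by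
      linarith [hsum]
    have hbd : (b : ℝ) * d ≠ 0 := by positivity
    field_simp
    linear_combination hmain
  -- Step 2: there is t₀ with z t₀ = (1/2) log (ac/(bd))
  have hL : ∃ t₀, z t₀ = (1/2) * Real.log (a * c / (b * d)) := by
    obtain ⟨x1, hx1, hmin⟩ := isCompact_Icc.exists_isMinOn (nonempty_Icc.2 hT.le)
      (hexpc.continuousOn (s := Set.Icc 0 T))
    obtain ⟨x2, hx2, hmax⟩ := isCompact_Icc.exists_isMaxOn (nonempty_Icc.2 hT.le)
      (hexpc.continuousOn (s := Set.Icc 0 T))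
    have h1 : Real.exp (2 * z x1) ≤ a * c / (b * d) := by
      have hmono : ∫ t in (0:ℝ)..T, Real.exp (2 * z x1)
          ≤ ∫ t in (0:ℝ)..T, Real.exp (2 * z t) := by
        apply intervalIntegral.integral_mono_on hT.le intervalIntegrable_const
          (hexpc.intervalIntegrable 0 T)
        intro x hx
        exact hmin hx
      rw [intervalIntegral.integral_const, Iexp, smul_eq_mul, sub_zero] at hmono
      have hmono2 : Real.exp (2 * z x1) * T ≤ (a * c / (b * d)) * T := by
        rw [mul_comm]
        calc T * Real.exp (2 * z x1) ≤ a * c * T / (b * d) := hmono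
          _ = (a * c / (b * d)) * T := by ring
      exact le_of_mul_le_mul_right hmono2 hT
    have h2 : a * c / (b * d) ≤ Real.exp (2 * z x2) := by
      have hmono : ∫ t in (0:ℝ)..T, Real.exp (2 * z t)
          ≤ ∫ t in (0:ℝ)..T, Real.exp (2 * z x2) := by
        apply intervalIntegral.integral_mono_on hT.le
          (hexpc.intervalIntegrable 0 T) intervalIntegrable_const
        intro x hx
        exact hmax hx
      rw [intervalIntegral.integral_const, Iexp, smul_eq_mul, sub_zero] at hmono
      have hmono2 : (a * c / (b * d)) * T ≤ Real.exp (2 * z x2) * T := by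
        rw [mul_comm (Real.exp (2 * z x2))]
        calc (a * c / (b * d)) * T = a * c * T / (b * d) := by ring
          _ ≤ T * Real.exp (2 * z x2) := hmono
          _ = T * Real.exp (2 * z x2) := rfl
      exact le_of_mul_le_mul_right hmono2 hT
    have hsub := intermediate_value_uIcc
      (hexpc.continuousOn (s := Set.uIcc x1 x2))
    have hmem : a * c / (b * d) ∈ Set.uIcc (Real.exp (2 * z x1)) (Real.exp (2 * z x2)) :=
      Set.Icc_subset_uIcc ⟨h1, h2⟩
    obtain ⟨t₀, _, ht₀⟩ := hsub hmem
    refine ⟨t₀, ?_⟩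
    have : 2 * z t₀ = Real.log (a * c / (b * d)) := by
      rw [← ht₀, Real.log_exp]
    linarith
  obtain ⟨t₀, ht₀⟩ := hL
  -- Step 3: energy bound
  set K := Real.sqrt (∫ s in (0:ℝ)..T, (f s) ^ 2) with hK
  set E := ∫ t in (0:ℝ)..T, (z' t) ^ 2 with hE
  have hE0 : 0 ≤ E := intervalIntegral.integral_nonneg hT.le (fun x _ => sq_nonneg _)
  have hK0 : 0 ≤ K := Real.sqrt_nonneg _
  have henergy : c * E = b * ∫ t in (0:ℝ)..T, f t * z' t := by
    have hsum : ∫ t in (0:ℝ)..T,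
        (z'' t * z' t + c * (z' t) ^ 2 + b * d * (Real.exp (2 * z t) * z' t))
        = ∫ t in (0:ℝ)..T, (a * c * z' t + b * (f t * z' t)) := by
      apply intervalIntegral.integral_congr
      intro x _
      have h := heq x
      linear_combination z' x * h
    rw [intervalIntegral.integral_add (f := fun t => z'' t * z' t + c * (z' t) ^ 2)
        (g := fun t => b * d * (Real.exp (2 * z t) * z' t))
        (((hz''cont.mul hz'c).intervalIntegrable 0 T).add
          ((continuous_const.mul (hz'c.pow 2)).intervalIntegrable 0 T))
        ((continuous_const.mul (hexpc.mul hz'c)).intervalIntegrable 0 T),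
      intervalIntegral.integral_add (f := fun t => z'' t * z' t) (g := fun t => c * (z' t) ^ 2)
        ((hz''cont.mul hz'c).intervalIntegrable 0 T)
        ((continuous_const.mul (hz'c.pow 2)).intervalIntegrable 0 T),
      intervalIntegral.integral_const_mul, intervalIntegral.integral_const_mul,
      intervalIntegral.integral_add (f := fun t => a * c * z' t) (g := fun t => b * (f t * z' t))
        ((continuous_const.mul hz'c).intervalIntegrable 0 T)
        ((continuous_const.mul (hf.mul hz'c)).intervalIntegrable 0 T),
      intervalIntegral.integral_const_mul, intervalIntegral.integral_const_mul,
      ftczz, ftcexp, ftcz, hzT] at hsum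
    rw [hE]
    linarith [hsum]
  have hcs : ∫ t in (0:ℝ)..T, f t * z' t ≤ K * Real.sqrt E :=
    cs_interval hf hz'c hT.le
  have hsqE : Real.sqrt E ≤ (b / c) * K := by
    have h1 : c * E ≤ b * (K * Real.sqrt E) := by
      calc c * E = b * ∫ t in (0:ℝ)..T, f t * z' t := henergy
        _ ≤ b * (K * Real.sqrt E) := by
            apply mul_le_mul_of_nonneg_left hcs hb.le
    have hss : Real.sqrt E * Real.sqrt E = E := Real.mul_self_sqrt hE0
    rcases eq_or_lt_of_le (Real.sqrt_nonneg E) with h | h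
    · rw [← h]; positivity
    · have h2 : c * Real.sqrt E ≤ b * K := by nlinarith [hss, h1, h]
      rw [div_mul_eq_mul_div, le_div_iff₀ hc]
      linarith [h2]
  -- Step 4: Sobolev-type bound
  intro t
  obtain ⟨t₁, ht₁, hzt⟩ := hzper.exists_mem_Ico hT t t₀
  have ht₁l : t₀ ≤ t₁ := ht₁.1
  have ht₁r : t₁ ≤ t₀ + T := ht₁.2.le
  have key : |z t₁ - z t₀| ≤ (Real.sqrt T / 2) * ((b / c) * K) := by
    have e1 : z t₁ - z t₀ = ∫ s in t₀..t₁, z' s := (ftcz t₀ t₁).symm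
    have e2 : z t₀ - z t₁ = ∫ s in t₁..(t₀ + T), z' s := by
      rw [ftcz, hzper t₀]
    have a1 : |∫ s in t₀..t₁, z' s| ≤ ∫ s in t₀..t₁, |z' s| :=
      intervalIntegral.abs_integral_le_integral_abs ht₁l
    have a2 : |∫ s in t₁..(t₀ + T), z' s| ≤ ∫ s in t₁..(t₀ + T), |z' s| :=
      intervalIntegral.abs_integral_le_integral_abs ht₁r
    have adj : (∫ s in t₀..t₁, |z' s|) + ∫ s in t₁..(t₀ + T), |z' s|
        = ∫ s in t₀..(t₀ + T), |z' s| :=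
      intervalIntegral.integral_add_adjacent_intervals
        (hz'c.abs.intervalIntegrable _ _) (hz'c.abs.intervalIntegrable _ _)
    have hTle : t₀ ≤ t₀ + T := by linarith
    have csT : ∫ s in t₀..(t₀ + T), (1:ℝ) * |z' s|
        ≤ Real.sqrt (∫ s in t₀..(t₀ + T), (1:ℝ) ^ 2)
          * Real.sqrt (∫ s in t₀..(t₀ + T), |z' s| ^ 2) :=
      cs_interval continuous_const hz'c.abs hTle
    have hone : ∫ s in t₀..(t₀ + T), (1:ℝ) * |z' s| = ∫ s in t₀..(t₀ + T), |z' s| := by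
      simp
    have hsq1 : (∫ s in t₀..(t₀ + T), (1:ℝ) ^ 2) = T := by
      simp
    have hper2 : Function.Periodic (fun s => (z' s) ^ 2) T := by
      intro s; simp [hz'per s]
    have habs2 : (∫ s in t₀..(t₀ + T), |z' s| ^ 2) = E := by
      have : (∫ s in t₀..(t₀ + T), |z' s| ^ 2) = ∫ s in t₀..(t₀ + T), (z' s) ^ 2 := by
        apply intervalIntegral.integral_congr
        intro x _
        simp [sq_abs]
      rw [this, hE]
      have := hper2.intervalIntegral_add_eq t₀ 0
      simpa using this
    have csT' : ∫ s in t₀..(t₀ + T), |z' s| ≤ Real.sqrt T * Real.sqrt E := by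
      rw [← hone]
      calc ∫ s in t₀..(t₀ + T), (1:ℝ) * |z' s|
          ≤ Real.sqrt (∫ s in t₀..(t₀ + T), (1:ℝ) ^ 2)
            * Real.sqrt (∫ s in t₀..(t₀ + T), |z' s| ^ 2) := csT
        _ = Real.sqrt T * Real.sqrt E := by rw [hsq1, habs2]
    have d1 : z t₁ - z t₀ ≤ ∫ s in t₀..t₁, |z' s| := by
      rw [e1]; exact (le_abs_self _).trans a1
    have d2 : z t₁ - z t₀ ≤ ∫ s in t₁..(t₀ + T), |z' s| := by
      rw [show z t₁ - z t₀ = -(∫ s in t₁..(t₀ + T), z' s) from by rw [← e2]; ring]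
      exact (neg_le_abs _).trans a2
    have d3 : z t₀ - z t₁ ≤ ∫ s in t₀..t₁, |z' s| := by
      rw [show z t₀ - z t₁ = -(∫ s in t₀..t₁, z' s) from by rw [← e1]; ring]
      exact (neg_le_abs _).trans a1
    have d4 : z t₀ - z t₁ ≤ ∫ s in t₁..(t₀ + T), |z' s| := by
      rw [e2]; exact (le_abs_self _).trans a2
    have h2abs : 2 * |z t₁ - z t₀| ≤ Real.sqrt T * Real.sqrt E := by
      rcases abs_cases (z t₁ - z t₀) with ⟨habs, _⟩ | ⟨habs, _⟩ <;> rw [habs] <;>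
        linarith [csT', adj, d1, d2, d3, d4]
    have hsqT : 0 ≤ Real.sqrt T := Real.sqrt_nonneg T
    calc |z t₁ - z t₀| ≤ (Real.sqrt T * Real.sqrt E) / 2 := by linarith
      _ ≤ (Real.sqrt T / 2) * ((b / c) * K) := by
          have h := mul_le_mul_of_nonneg_left hsqE hsqT
          linarith
  have hfin : |z t - z t₀| ≤ (Real.sqrt T / 2) * ((b / c) * K) := by
    rw [hzt]; exact key
  obtain ⟨hl, hr⟩ := abs_le.mp hfin
  have hre : (Real.sqrt T / 2) * (b / c) * K = (Real.sqrt T / 2) * ((b / c) * K) := by ring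
  rw [hK] at *
  constructor <;> rw [hre] <;> linarith [ht₀, hl, hr]
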